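/- Let f: ℝ → ℝ be a nonnegative C¹ function defined on all of ℝ satisfying (f²/2)′ = B f³ for a nonzero constant B. Then f ≡ 0. -/

import Mathlib

noncomputable section

private lemma aux_ode_pos (f : ℝ → ℝ) (hfd : Differentiable ℝ f)
    (hpos : ∀ t : ℝ, 0 ≤ f t) (B : ℝ) (hB : 0 < B)
    (hd : ∀ t : ℝ, deriv f t = B * f t ^ 2) : ∀ t : ℝ, f t = 0 := by
  by_contra h
  push_neg at h
  obtain ⟨t₀, ht₀⟩ := h
  have hc : 0 < f t₀ := lt_of_le_of_ne (hpos t₀) (Ne.symm ht₀)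
  have hmono : Monotone f := by
    apply monotone_of_deriv_nonneg hfd
    intro x
    rw [hd x]
    positivity
  set T : ℝ := t₀ + ((f t₀)⁻¹ + 1) / B with hT
  have hTt : t₀ ≤ T := by
    have : 0 ≤ ((f t₀)⁻¹ + 1) / B := by positivity
    rw [hT]; linarith
  have hfx : ∀ x ∈ Set.Icc t₀ T, 0 < f x := fun x hx =>
    lt_of_lt_of_le hc (hmono hx.1)
  set g : ℝ → ℝ := fun t => (f t)⁻¹ + B * t with hg
  have hgd : ∀ x ∈ Set.Ico t₀ T, HasDerivWithinAt g 0 (Set.Ici x) x := by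
    intro x hx
    have hne : f x ≠ 0 := (hfx x ⟨hx.1, hx.2.le⟩).ne'
    have h1 : HasDerivAt f (deriv f x) x := (hfd x).hasDerivAt
    have h2 : HasDerivAt (fun t => (f t)⁻¹) (-(deriv f x) / f x ^ 2) x := h1.inv hne
    have h3 : HasDerivAt g (-(deriv f x) / f x ^ 2 + B) x :=
      h2.add ((hasDerivAt_id x).const_mul B |>.congr_deriv (by ring))
    have : -(deriv f x) / f x ^ 2 + B = 0 := by
      rw [hd x]; field_simp; ring
    rw [this] at h3
    exact h3.hasDerivWithinAt
  have hcont : ContinuousOn g (Set.Icc t₀ T) := by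
    apply ContinuousOn.add
    · exact (hfd.continuous.continuousOn).inv₀ fun x hx => (hfx x hx).ne'
    · exact (continuous_const.mul continuous_id).continuousOn
  have hconst := constant_of_has_deriv_right_zero hcont hgd T ⟨hTt, le_rfl⟩
  have hfT : 0 < f T := hfx T ⟨hTt, le_rfl⟩
  have : (f T)⁻¹ = -1 := by
    have hgeq : (f T)⁻¹ + B * T = (f t₀)⁻¹ + B * t₀ := hconst
    have hBT : B * T = B * t₀ + ((f t₀)⁻¹ + 1) := by
      rw [hT]; field_simp
    linarith
  have : (0:ℝ) < -1 := this ▸ inv_pos.mpr hfT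
  linarith

/-- If `f : ℝ → ℝ` is a nonnegative `C¹` function on all of `ℝ` satisfying the ODE
`(f²/2)′ = B f³` for a nonzero constant `B`, then `f ≡ 0`. -/
theorem ode_global_nonneg_solution_eq_zero
    (f : ℝ → ℝ) (hf : ContDiff ℝ 1 f) (hpos : ∀ t : ℝ, 0 ≤ f t)
    (B : ℝ) (hB : B ≠ 0)
    (hode : ∀ t : ℝ, deriv (fun s => f s ^ 2 / 2) t = B * f t ^ 3) :
    ∀ t : ℝ, f t = 0 := by
  have hfd : Differentiable ℝ f := hf.differentiable one_ne_zero
  have hd : ∀ t : ℝ, deriv f t = B * f t ^ 2 := by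
    intro t
    rcases eq_or_ne (f t) 0 with h0 | h0
    · have hmin : IsLocalMin f t := Filter.Eventually.of_forall fun y => by
        rw [h0]; exact hpos y
      rw [hmin.deriv_eq_zero, h0]; ring
    · have h1 : HasDerivAt (fun s => f s ^ 2 / 2)
          ((2 * f t ^ 1 * deriv f t) / 2) t := ((hfd t).hasDerivAt.pow 2).div_const 2
      have h2 := h1.deriv
      rw [hode t] at h2
      have h3 : f t * deriv f t = f t * (B * f t ^ 2) := by
        linear_combination (-1 : ℝ) * h2
      exact mul_left_cancel₀ h0 h3
  rcases hB.lt_or_gt with hBneg | hBpos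
  · -- B < 0 : consider g t = f (-t)
    set g : ℝ → ℝ := fun t => f (-t) with hg
    have hgd : Differentiable ℝ g := hfd.comp (differentiable_neg)
    have hgderiv : ∀ t : ℝ, deriv g t = (-B) * g t ^ 2 := by
      intro t
      have h1 : HasDerivAt g (deriv f (-t) * (-1)) t :=
        (hfd (-t)).hasDerivAt.comp t ((hasDerivAt_id t).neg)
      rw [h1.deriv, hd (-t)]
      simp only [hg]; ring
    have := aux_ode_pos g hgd (fun t => hpos (-t)) (-B) (by linarith) hgderiv
    intro t
    have := this (-t)
    simpa [hg] using this
  · exact aux_ode_pos f hfd hpos B hBpos hd
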